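/- Let Q ∈ ℝ^{m×k} have full column rank, y ∈ ℝ^m, K := QᵀQ, c := K^{-1/2} Qᵀ y, and s := √(yᵀy − cᵀc). Let u ∈ ℝ^k satisfy uᵀ K^{-1} u < 1. Then the infimum over z ∈ ℝ^k of ‖Q z − y‖₂ + uᵀ z equals uᵀ K^{-1/2} c + s·√(1 − uᵀ K^{-1} u). -/

import Mathlib

open Matrix

/-- The positive semidefinite square root of a positive semidefinite matrix
(the definition `Matrix.PosSemidef.sqrt` of the older Mathlib, since removed). -/
noncomputable def Matrix.PosSemidef.sqrt {n : Type*} [Fintype n] [DecidableEq n]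
    {A : Matrix n n ℝ} (hA : A.PosSemidef) : Matrix n n ℝ :=
  hA.1.eigenvectorUnitary.1 * diagonal ((↑) ∘ (√·) ∘ hA.1.eigenvalues) *
  (star hA.1.eigenvectorUnitary : Matrix n n ℝ)

/-- Euclidean norm of a vector in `ℝ^n`. -/
noncomputable def norm2 {n : ℕ} (x : Fin n → ℝ) : ℝ := Real.sqrt (∑ i, x i ^ 2)

lemma sqrtR_mul_self {n : Type*} [Fintype n] [DecidableEq n]
    {A : Matrix n n ℝ} (hA : A.PosSemidef) : hA.sqrt * hA.sqrt = A := by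
  unfold Matrix.PosSemidef.sqrt
  have hU : (star hA.1.eigenvectorUnitary : Matrix n n ℝ) * hA.1.eigenvectorUnitary.1 = 1 :=
    Unitary.coe_star_mul_self _
  conv_rhs => rw [hA.1.spectral_theorem, Unitary.conjStarAlgAut_apply]
  have hD : diagonal ((↑) ∘ (√·) ∘ hA.1.eigenvalues) * diagonal ((↑) ∘ (√·) ∘ hA.1.eigenvalues)
      = (diagonal (RCLike.ofReal ∘ hA.1.eigenvalues) : Matrix n n ℝ) := by
    rw [diagonal_mul_diagonal]; congr 1; funext i
    simp [Real.mul_self_sqrt (hA.eigenvalues_nonneg i)]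
  rw [← hD]
  simp only [Matrix.mul_assoc]
  rw [← Matrix.mul_assoc _ _ (diagonal _ * _), hU, Matrix.one_mul]

lemma sqrtR_transpose {n : Type*} [Fintype n] [DecidableEq n]
    {A : Matrix n n ℝ} (hA : A.PosSemidef) : (hA.sqrt)ᵀ = hA.sqrt := by
  unfold Matrix.PosSemidef.sqrt
  simp [transpose_mul, Matrix.mul_assoc, Matrix.star_eq_conjTranspose]

lemma key_lb (s a b r t vw : ℝ) (hs : 0 ≤ s) (ha : 0 ≤ a) (hb : 0 ≤ b)
    (hab : a^2 + b^2 = 1) (hr : 0 ≤ r) (ht : 0 ≤ t) (ht2 : t^2 = r^2 + s^2)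
    (hcs : vw^2 ≤ a^2 * r^2) : s*b ≤ t + vw := by
  have h1 : -(a*r) ≤ vw := by
    by_contra h; push_neg at h
    have h2 : vw + a*r < 0 := by linarith
    have h3 : vw - a*r < 0 := by nlinarith [mul_nonneg ha hr]
    nlinarith [mul_pos_of_neg_of_neg h2 h3]
  have h2 : a*r + b*s ≤ t := by
    nlinarith [sq_nonneg (b*r - a*s), sq_nonneg (t + a*r + b*s), mul_nonneg ha hr, mul_nonneg hb hs]
  linarith

lemma cs_dot {k : ℕ} (v w : Fin k → ℝ) : (v ⬝ᵥ w)^2 ≤ (v ⬝ᵥ v) * (w ⬝ᵥ w) := by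
  simpa [dotProduct, sq] using Finset.sum_mul_sq_le_sq_mul_sq Finset.univ v w

lemma dot_self_nonneg' {n : ℕ} (x : Fin n → ℝ) : 0 ≤ x ⬝ᵥ x :=
  Finset.sum_nonneg fun i _ => mul_self_nonneg _

lemma norm2_eq' {n : ℕ} (x : Fin n → ℝ) : norm2 x = Real.sqrt (x ⬝ᵥ x) := by
  unfold norm2; congr 1; simp [dotProduct, sq]

lemma expand' {p k : ℕ} (A : Matrix (Fin p) (Fin k) ℝ) (x : Fin p → ℝ) (z : Fin k → ℝ) :
    (A.mulVec z - x) ⬝ᵥ (A.mulVec z - x)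
      = z ⬝ᵥ (Aᵀ * A).mulVec z - 2 * (z ⬝ᵥ Aᵀ.mulVec x) + x ⬝ᵥ x := by
  have h1 : A.mulVec z ⬝ᵥ A.mulVec z = z ⬝ᵥ (Aᵀ * A).mulVec z := by
    rw [← mulVec_mulVec, dotProduct_mulVec, ← mulVec_transpose, dotProduct_comm,
      dotProduct_mulVec, ← mulVec_transpose, transpose_transpose]
  have h3 : x ⬝ᵥ A.mulVec z = z ⬝ᵥ Aᵀ.mulVec x := by
    rw [dotProduct_mulVec, ← mulVec_transpose]
    exact dotProduct_comm _ _
  have h2 : A.mulVec z ⬝ᵥ x = z ⬝ᵥ Aᵀ.mulVec x := by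
    rw [dotProduct_comm]; exact h3
  simp only [sub_dotProduct, dotProduct_sub, h1, h2, h3]
  ring

theorem dual_function_f1_closed_form
    {m k : ℕ} (Q : Matrix (Fin m) (Fin k) ℝ) (hQ : Q.rank = k)
    (hK : (Qᵀ * Q).PosDef) (y : Fin m → ℝ) (u : Fin k → ℝ)
    (hu : u ⬝ᵥ (Qᵀ * Q)⁻¹.mulVec u < 1) :
    ∀ c : Fin k → ℝ, c = (Matrix.PosSemidef.sqrt hK.posSemidef)⁻¹.mulVec (Qᵀ.mulVec y) →
    ∀ s : ℝ, s = Real.sqrt (y ⬝ᵥ y - c ⬝ᵥ c) →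
      sInf {t : ℝ | ∃ z : Fin k → ℝ, t = norm2 (Q.mulVec z - y) + u ⬝ᵥ z} =
        u ⬝ᵥ (Matrix.PosSemidef.sqrt hK.posSemidef)⁻¹.mulVec c
          + s * Real.sqrt (1 - u ⬝ᵥ (Qᵀ * Q)⁻¹.mulVec u) := by
  intro c hc s hs
  set R := Matrix.PosSemidef.sqrt hK.posSemidef with hRdef
  have hRR : R * R = Qᵀ * Q := sqrtR_mul_self hK.posSemidef
  have hRsym : Rᵀ = R := by
    have h := sqrtR_transpose hK.posSemidef
    simpa [Matrix.IsHermitian] using h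
  have hdetR : IsUnit R.det := by
    have hmul : R.det * R.det = (Qᵀ * Q).det := by rw [← det_mul, hRR]
    refine isUnit_iff_ne_zero.mpr fun h => ?_
    rw [h, mul_zero] at hmul
    exact hK.det_pos.ne' hmul.symm
  have hRRinv : R * R⁻¹ = 1 := mul_nonsing_inv _ hdetR
  have hKinv : (Qᵀ * Q)⁻¹ = R⁻¹ * R⁻¹ := by rw [← hRR, Matrix.mul_inv_rev]
  have hRinvsym : R⁻¹ᵀ = R⁻¹ := by rw [transpose_nonsing_inv, hRsym]
  set v : Fin k → ℝ := R⁻¹.mulVec u with hvdef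
  have hvv : u ⬝ᵥ (Qᵀ * Q)⁻¹.mulVec u = v ⬝ᵥ v := by
    rw [hKinv, ← mulVec_mulVec, dotProduct_mulVec, ← mulVec_transpose, hRinvsym]
  have hvc : u ⬝ᵥ R⁻¹.mulVec c = v ⬝ᵥ c := by
    rw [dotProduct_mulVec, ← mulVec_transpose, hRinvsym]
  have huz : ∀ z : Fin k → ℝ, u ⬝ᵥ z = v ⬝ᵥ R.mulVec z := by
    intro z
    have hRv : R.mulVec v = u := by rw [hvdef, mulVec_mulVec, hRRinv, one_mulVec]
    rw [dotProduct_mulVec, ← mulVec_transpose, hRsym, hRv]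
  have hRc : R.mulVec c = Qᵀ.mulVec y := by
    rw [hc, mulVec_mulVec, hRRinv, one_mulVec]
  have hobj : ∀ z : Fin k → ℝ, (Q.mulVec z - y) ⬝ᵥ (Q.mulVec z - y)
      = (R.mulVec z - c) ⬝ᵥ (R.mulVec z - c) + (y ⬝ᵥ y - c ⬝ᵥ c) := by
    intro z
    have e1 := expand' Q y z
    have e2 := expand' R c z
    rw [hRsym, hRR, hRc] at e2
    rw [e1, e2]; ring
  have hd0 : 0 ≤ y ⬝ᵥ y - c ⬝ᵥ c := by
    have hz : R.mulVec (R⁻¹.mulVec c) = c := by rw [mulVec_mulVec, hRRinv, one_mulVec]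
    have h := hobj (R⁻¹.mulVec c)
    rw [hz, sub_self, zero_dotProduct, zero_add] at h
    exact h ▸ dot_self_nonneg' _
  have hRRinv' : ∀ x : Fin k → ℝ, R.mulVec (R⁻¹.mulVec x) = x := by
    intro x; rw [mulVec_mulVec, hRRinv, one_mulVec]
  clear_value R
  clear hc hRdef hRR hRsym hdetR hRRinv hKinv hRinvsym hRc
  have hs0 : 0 ≤ s := hs ▸ Real.sqrt_nonneg _
  have hs2 : s ^ 2 = y ⬝ᵥ y - c ⬝ᵥ c := by rw [hs, Real.sq_sqrt hd0]
  have hvv1 : v ⬝ᵥ v < 1 := hvv ▸ hu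
  set a : ℝ := Real.sqrt (v ⬝ᵥ v) with hadef
  set b : ℝ := Real.sqrt (1 - v ⬝ᵥ v) with hbdef
  have ha0 : 0 ≤ a := Real.sqrt_nonneg _
  have hb0 : 0 ≤ b := Real.sqrt_nonneg _
  have ha2 : a ^ 2 = v ⬝ᵥ v := Real.sq_sqrt (dot_self_nonneg' v)
  have hb2 : b ^ 2 = 1 - v ⬝ᵥ v := Real.sq_sqrt (by linarith)
  have hbpos : 0 < b := Real.sqrt_pos.mpr (by linarith)
  have hab : a ^ 2 + b ^ 2 = 1 := by rw [ha2, hb2]; ring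
  have hvvb : v ⬝ᵥ v = 1 - b ^ 2 := by linarith
  clear_value v a b
  -- rewrite the target
  rw [hvc, hvv, ← hbdef]
  -- the candidate minimizer
  have hmem : v ⬝ᵥ c + s * b ∈
      {t : ℝ | ∃ z : Fin k → ℝ, t = norm2 (Q.mulVec z - y) + u ⬝ᵥ z} := by
    refine ⟨R⁻¹.mulVec (c - (s/b) • v), ?_⟩
    have hz : R.mulVec (R⁻¹.mulVec (c - (s/b) • v)) = c - (s/b) • v := hRRinv' _
    have hw : R.mulVec (R⁻¹.mulVec (c - (s/b) • v)) - c = (-(s/b)) • v := by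
      rw [hz, sub_sub_cancel_left, ← neg_smul]
    have hdot : ((-(s/b)) • v) ⬝ᵥ ((-(s/b)) • v) = (s/b)^2 * (v ⬝ᵥ v) := by
      rw [smul_dotProduct, dotProduct_smul, smul_eq_mul, smul_eq_mul]; ring
    have hn : norm2 (Q.mulVec (R⁻¹.mulVec (c - (s/b) • v)) - y) = s / b := by
      rw [norm2_eq', hobj, hw, hdot, ← hs2]
      have heq : (s/b)^2 * (v ⬝ᵥ v) + s^2 = (s/b)^2 := by
        rw [hvvb]; field_simp; ring
      rw [heq, Real.sqrt_sq (div_nonneg hs0 hb0)]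
    have hu' : u ⬝ᵥ R⁻¹.mulVec (c - (s/b) • v) = v ⬝ᵥ c - (s/b) * (v ⬝ᵥ v) := by
      rw [huz, hz, dotProduct_sub, dotProduct_smul, smul_eq_mul]
    rw [hn, hu']
    have heq2 : s / b * (v ⬝ᵥ v) = s / b - s * b := by
      rw [hvvb]; field_simp
    rw [heq2]; ring
  have hlb : ∀ t ∈ {t : ℝ | ∃ z : Fin k → ℝ, t = norm2 (Q.mulVec z - y) + u ⬝ᵥ z},
      v ⬝ᵥ c + s * b ≤ t := by
    rintro t ⟨z, rfl⟩
    have huzz : u ⬝ᵥ z = v ⬝ᵥ (R.mulVec z - c) + v ⬝ᵥ c := by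
      rw [huz z, dotProduct_sub]; ring
    have hnn : norm2 (Q.mulVec z - y) =
        Real.sqrt ((R.mulVec z - c) ⬝ᵥ (R.mulVec z - c) + s^2) := by
      rw [norm2_eq', hobj, hs2]
    set w : Fin k → ℝ := R.mulVec z - c with hwdef
    clear_value w
    rw [hnn, huzz]
    have key := key_lb s a b (Real.sqrt (w ⬝ᵥ w)) (Real.sqrt (w ⬝ᵥ w + s^2)) (v ⬝ᵥ w)
      hs0 ha0 hb0 hab (Real.sqrt_nonneg _) (Real.sqrt_nonneg _)
      (by rw [Real.sq_sqrt (add_nonneg (dot_self_nonneg' w) (sq_nonneg s)),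
              Real.sq_sqrt (dot_self_nonneg' w)])
      (by rw [ha2, Real.sq_sqrt (dot_self_nonneg' w)]; exact cs_dot v w)
    linarith [key]
  exact le_antisymm (csInf_le ⟨v ⬝ᵥ c + s * b, hlb⟩ hmem)
    (le_csInf ⟨_, hmem⟩ hlb)
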